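/- Splitting correctness for step 2 of the contextual matching algorithm: let [rs..re] be the SA' interval (in the suffix array of T^rev) of P^rev, and let rs = rs_1 < rs_2 < ... < rs_k be rs together with the positions p in (rs..re] where LCP'[p] < |P| + ℓ. Then k equals the number of distinct strings X of length ℓ such that XP occurs in the ℓ-padded text, and the i-th block [rs_i .. rs_{i+1} - 1] (with rs_{k+1} = re+1) consists exactly of the suffixes of T^rev beginning with P^rev X_i^rev for the i-th such X in lexicographic order of X^rev. -/

import Mathlib

/-- Length of the longest common prefix of two lists. -/
def lcpLen {α : Type*} [DecidableEq α] : List α → List α → ℕ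
  | a :: u, b :: v => if a = b then lcpLen u v + 1 else 0
  | _, _ => 0

section Aux
variable {α : Type*}

lemma lex_take [LinearOrder α] :
    ∀ (n : ℕ) {l l' : List α}, List.Lex (· < ·) l l' →
      List.Lex (· < ·) (l.take n) (l'.take n) ∨ l.take n = l'.take n := by
  intro n l l' h
  induction h generalizing n with
  | nil =>
    cases n with
    | zero => right; rfl
    | succ n => left; exact List.Lex.nil
  | @cons a l₁ l₂ h ih =>
    cases n with
    | zero => right; rfl
    | succ n =>
      rcases ih n with h' | h'
      · left; exact List.Lex.cons h'
      · right; simp [h']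
  | @rel a l₁ b l₂ hab =>
    cases n with
    | zero => right; rfl
    | succ n => left; exact List.Lex.rel hab

lemma take_le_take [LinearOrder α] (n : ℕ) {l l' : List α} (h : l ≤ l') :
    l.take n ≤ l'.take n := by
  rcases lt_or_eq_of_le h with h | rfl
  · have h' : List.Lex (· < ·) l l' := h
    rcases lex_take n h' with h'' | h''
    · exact le_of_lt h''
    · exact le_of_eq h''
  · exact le_rfl

lemma lcpLen_take [DecidableEq α] :
    ∀ (n : ℕ) (u v : List α), n ≤ lcpLen u v → u.take n = v.take n := by
  intro n
  induction n with
  | zero => intro u v _; rfl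
  | succ n ih =>
    intro u v h
    match u, v with
    | [], _ => simp [lcpLen] at h
    | a :: u', [] => simp [lcpLen] at h
    | a :: u', b :: v' =>
      by_cases hab : a = b
      · subst hab
        simp [lcpLen] at h
        simp [List.take_succ_cons, ih u' v' (by omega)]
      · simp [lcpLen, hab] at h

lemma take_lcpLen [DecidableEq α] :
    ∀ (n : ℕ) (u v : List α), u.take n = v.take n → n ≤ u.length → n ≤ lcpLen u v := by
  intro n
  induction n with
  | zero => intro u v _ _; exact Nat.zero_le _
  | succ n ih =>
    intro u v h hlen
    match u, v with
    | [], _ => simp at hlen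
    | a :: u', [] => simp at h
    | a :: u', b :: v' =>
      simp only [List.take_succ_cons, List.cons.injEq] at h
      obtain ⟨rfl, h2⟩ := h
      simp only [lcpLen, if_pos rfl, if_true]
      have := ih u' v' h2 (by simpa using hlen)
      omega

lemma nat_ivt (f : ℕ → ℕ) (hstep : ∀ x, f (x + 1) ≤ f x + 1) :
    ∀ (b a m : ℕ), a ≤ b → f a ≤ m → m ≤ f b → ∃ q, a ≤ q ∧ q ≤ b ∧ f q = m := by
  intro b
  induction b with
  | zero =>
    intro a m hab h1 h2
    interval_cases a
    exact ⟨0, le_rfl, le_rfl, le_antisymm h1 h2⟩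
  | succ b ih =>
    intro a m hab h1 h2
    rcases eq_or_lt_of_le h2 with heq | hlt
    · exact ⟨b + 1, hab, le_rfl, heq.symm⟩
    · have hb : m ≤ f b := by have := hstep b; omega
      have hab' : a ≤ b := by
        rcases Nat.lt_succ_iff_lt_or_eq.mp (Nat.lt_succ_of_le hab) with h | rfl
        · omega
        · omega
      obtain ⟨q, hq1, hq2, hq3⟩ := ih a m hab' h1 hb
      exact ⟨q, hq1, by omega, hq3⟩

lemma context_of_suffix [DecidableEq α] (T P : List α) (d : α) (ℓ : ℕ)
    (hdP : d ∉ P) (hPne : P ≠ []) {Tp : List α}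
    (hTp : Tp = List.replicate ℓ d ++ T ++ List.replicate ℓ d)
    {m : ℕ} (hocc : P <:+ Tp.take m) :
    ∃ X : List α, X.length = ℓ ∧ (X ++ P) <:+ Tp.take m := by
  obtain ⟨s, hs⟩ := hocc
  have hsl : ℓ ≤ s.length := by
    by_contra hcon
    push_neg at hcon
    obtain ⟨a, P', rfl⟩ := List.exists_cons_of_ne_nil hPne
    -- s ++ [a] and replicate (s.length+1) d are both prefixes of Tp of the same length
    have hpre1 : (s ++ [a]) <+: Tp := by
      have h1 : s ++ [a] <+: s ++ a :: P' := ⟨P', by simp⟩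
      have h2 : s ++ a :: P' <+: Tp := by
        rw [hs]; exact List.take_prefix m Tp
      exact h1.trans h2
    have hpre2 : (List.replicate (s.length + 1) d) <+: Tp := by
      have h3 : List.replicate (s.length + 1) d <+: List.replicate ℓ d :=
        ⟨List.replicate (ℓ - (s.length + 1)) d, by
          rw [← List.replicate_add]; congr 1; omega⟩
      have h4 : List.replicate ℓ d <+: Tp := by
        rw [hTp, List.append_assoc]; exact List.prefix_append _ _
      exact h3.trans h4
    have hlen : (s ++ [a]).length = (List.replicate (s.length + 1) d).length := by simp
    have heq : s ++ [a] = List.replicate (s.length + 1) d := by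
      have e1 := List.prefix_iff_eq_take.mp hpre1
      have e2 := List.prefix_iff_eq_take.mp hpre2
      rw [e1, e2, hlen]
    have : a = d := by
      have : a ∈ List.replicate (s.length + 1) d := by
        rw [← heq]; simp
      exact List.eq_of_mem_replicate this
    exact hdP (by simp [this])
  refine ⟨s.drop (s.length - ℓ), by simp; omega, s.take (s.length - ℓ), ?_⟩
  rw [← List.append_assoc, List.take_append_drop, hs]

end Aux


/-- splitting correctness for step 2 of the contextual matching
algorithm. Let `[rs..re]` be the suffix-array interval (in the suffix array
`SA'` of the reverse `R` of the padded text `Tp`) of `P.reverse`. Then: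
(a) every suffix in the interval begins with `P.reverse ++ X.reverse` for some
left context `X` of length `ℓ` with `X ++ P` occurring in `Tp`;
(b) two ranks lie in the same block (i.e. their suffixes share their first
`|P| + ℓ` symbols) iff `LCP'[p] ≥ |P| + ℓ` for all `p` strictly between them,
so the blocks start exactly at `rs` and at the positions `p ∈ (rs..re]` with
`LCP'[p] < |P| + ℓ`;
(c) the number of blocks, `1 +` the number of such split positions, equals the
number of distinct strings `X` of length `ℓ` with `X ++ P` occurring in the
padded text; and
(d) the blocks appear in lexicographic order of `X.reverse`. -/
theorem step2_splitting_correct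
    {α : Type*} [LinearOrder α] (T P : List α) (d : α) (ℓ : ℕ)
    (hdP : d ∉ P) (hdT : d ∉ T) (hPne : P ≠ [])
    (Tp R : List α) (hTp : Tp = List.replicate ℓ d ++ T ++ List.replicate ℓ d)
    (hR : R = Tp.reverse)
    (N : ℕ) (hN : N = Tp.length)
    (SA' LCP' : ℕ → ℕ)
    (hbij' : Set.BijOn SA' (Set.Iio N) (Set.Iio N))
    (hsort' : ∀ a b : ℕ, a < b → b < N → R.drop (SA' a) < R.drop (SA' b))
    (hLCP' : ∀ k, 0 < k → k < N →
      LCP' k = lcpLen (R.drop (SA' (k - 1))) (R.drop (SA' k)))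
    (rs re : ℕ) (hrs : rs ≤ re) (hre : re < N)
    (hInt : ∀ q, q < N →
      ((rs ≤ q ∧ q ≤ re) ↔ P.reverse <+: R.drop (SA' q))) :
    (∀ q, rs ≤ q → q ≤ re → ∃ X : List α, X.length = ℓ ∧ (X ++ P) <:+: Tp ∧
      (R.drop (SA' q)).take (P.length + ℓ) = P.reverse ++ X.reverse) ∧
    (∀ i i' : ℕ, rs ≤ i → i ≤ i' → i' ≤ re →
      ((R.drop (SA' i)).take (P.length + ℓ)
          = (R.drop (SA' i')).take (P.length + ℓ)
        ↔ ∀ p, i < p → p ≤ i' → P.length + ℓ ≤ LCP' p)) ∧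
    {X : List α | X.length = ℓ ∧ (X ++ P) <:+: Tp}.ncard
      = 1 + ((Finset.Ioc rs re).filter
          (fun p => LCP' p < P.length + ℓ)).card ∧
    (∀ i i' : ℕ, rs ≤ i → i ≤ i' → i' ≤ re →
      (R.drop (SA' i)).take (P.length + ℓ)
        ≤ (R.drop (SA' i')).take (P.length + ℓ)) := by
  subst hR hN
  set n : ℕ := P.length + ℓ with hn
  -- drop of reverse is reverse of take
  have hdropeq : ∀ j, j ≤ Tp.length →
      Tp.reverse.drop j = (Tp.take (Tp.length - j)).reverse := by
    intro j hj
    rw [List.reverse_take]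
    congr 1
    omega
  -- part (a)
  have hA : ∀ q, rs ≤ q → q ≤ re → ∃ X : List α, X.length = ℓ ∧ (X ++ P) <:+: Tp ∧
      (Tp.reverse.drop (SA' q)).take n = P.reverse ++ X.reverse := by
    intro q h1 h2
    have hqN : q < Tp.length := lt_of_le_of_lt h2 hre
    have hjN : SA' q < Tp.length := hbij'.mapsTo (Set.mem_Iio.mpr hqN)
    have hpre : P.reverse <+: Tp.reverse.drop (SA' q) := (hInt q hqN).mp ⟨h1, h2⟩
    set m := Tp.length - SA' q with hm
    have hdq : Tp.reverse.drop (SA' q) = (Tp.take m).reverse := hdropeq _ (le_of_lt hjN)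
    have hsuf : P <:+ Tp.take m := by
      rw [hdq] at hpre
      exact List.reverse_prefix.mp hpre
    obtain ⟨X, hXl, hXsuf⟩ := context_of_suffix T P d ℓ hdP hPne hTp hsuf
    refine ⟨X, hXl, hXsuf.isInfix.trans (List.take_prefix m Tp).isInfix, ?_⟩
    have hpre2 : (P.reverse ++ X.reverse) <+: (Tp.take m).reverse := by
      rw [← List.reverse_append]
      exact List.reverse_prefix.mpr hXsuf
    have hlen : (P.reverse ++ X.reverse).length = n := by simp [hXl, hn]
    rw [hdq, ← hlen]
    exact (List.prefix_iff_eq_take.mp hpre2).symm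
  -- lengths of suffixes in the interval
  have hlen_ge : ∀ q, rs ≤ q → q ≤ re → n ≤ (Tp.reverse.drop (SA' q)).length := by
    intro q h1 h2
    obtain ⟨X, hXl, _, hXt⟩ := hA q h1 h2
    have := congrArg List.length hXt
    rw [List.length_take, List.length_append, List.length_reverse,
      List.length_reverse, hXl] at this
    omega
  -- part (d)
  have hD : ∀ i i' : ℕ, rs ≤ i → i ≤ i' → i' ≤ re →
      (Tp.reverse.drop (SA' i)).take n ≤ (Tp.reverse.drop (SA' i')).take n := by
    intro i i' h1 h2 h3
    rcases eq_or_lt_of_le h2 with rfl | hlt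
    · exact le_rfl
    · exact take_le_take n (le_of_lt (hsort' i i' hlt (lt_of_le_of_lt h3 hre)))
  -- part (b)
  have hB : ∀ i i' : ℕ, rs ≤ i → i ≤ i' → i' ≤ re →
      ((Tp.reverse.drop (SA' i)).take n = (Tp.reverse.drop (SA' i')).take n
        ↔ ∀ p, i < p → p ≤ i' → n ≤ LCP' p) := by
    intro i i' h1 h2 h3
    constructor
    · intro heq p hp1 hp2
      have e1 := hD i (p - 1) h1 (by omega) (by omega)
      have e2 := hD (p - 1) p (by omega) (by omega) (by omega)
      have e3 := hD p i' (by omega) hp2 h3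
      rw [heq] at e1
      have heq2 : (Tp.reverse.drop (SA' (p - 1))).take n
          = (Tp.reverse.drop (SA' p)).take n :=
        le_antisymm e2 (e3.trans e1)
      rw [hLCP' p (by omega) (by omega)]
      exact take_lcpLen n _ _ heq2 (hlen_ge (p - 1) (by omega) (by omega))
    · intro hall
      have key : ∀ k, i + k ≤ i' → (Tp.reverse.drop (SA' i)).take n
          = (Tp.reverse.drop (SA' (i + k))).take n := by
        intro k
        induction k with
        | zero => intro _; rfl
        | succ k ih =>
          intro hk
          have h1' := ih (by omega)
          have h2' : n ≤ LCP' (i + k + 1) := hall (i + k + 1) (by omega) (by omega)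
          rw [hLCP' (i + k + 1) (by omega) (by omega)] at h2'
          have h3' := lcpLen_take n _ _ h2'
          simp only [Nat.add_sub_cancel] at h3'
          exact h1'.trans h3'
      have := key (i' - i) (by omega)
      rwa [Nat.add_sub_cancel' h2] at this
  refine ⟨hA, hB, ?_, hD⟩
  classical
  set s : Finset ℕ := Finset.Icc rs re with hs
  set F : ℕ → List α := fun q => (Tp.reverse.drop (SA' q)).take n with hF
  set G : ℕ → List α := fun q => ((F q).drop P.length).reverse with hG
  set B : ℕ → ℕ := fun q =>
    ((Finset.Ioc rs q).filter (fun p => LCP' p < n)).card with hB'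
  have hGspec : ∀ q (X : List α), F q = P.reverse ++ X.reverse → G q = X := by
    intro q X hq
    rw [hG]
    simp only [hq]
    rw [show P.length = P.reverse.length from List.length_reverse.symm,
      List.drop_left, List.reverse_reverse]
  have hFG : ∀ q, rs ≤ q → q ≤ re → F q = P.reverse ++ (G q).reverse := by
    intro q h1 h2
    obtain ⟨X, _, _, hXt⟩ := hA q h1 h2
    rw [hGspec q X hXt]
    exact hXt
  -- set description
  have hset : {X : List α | X.length = ℓ ∧ (X ++ P) <:+: Tp}
      = ↑(Finset.image G s) := by
    ext X
    simp only [Set.mem_setOf_eq, Finset.coe_image, Set.mem_image,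
      Finset.mem_coe, hs, Finset.mem_Icc]
    constructor
    · rintro ⟨hXl, u, v, huv⟩
      set m := u.length + (ℓ + P.length) with hm
      have hTplen : Tp.length = u.length + (ℓ + P.length) + v.length := by
        rw [← huv]; first | (simp [hXl]; omega) | simp [hXl]
      have hmN : m ≤ Tp.length := by omega
      have hlenu : (u ++ (X ++ P)).length = m := by first | (simp [hXl]; omega) | simp [hXl]
      have htake : Tp.take m = u ++ (X ++ P) := by
        rw [← huv, ← hlenu, List.take_left]
      have hmpos : 0 < m := by
        have : 0 < P.length := List.length_pos_iff.mpr hPne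
        omega
      have hj : Tp.length - m < Tp.length := by omega
      obtain ⟨q, hqIio, hq⟩ := hbij'.surjOn (Set.mem_Iio.mpr hj)
      have hqN : q < Tp.length := hqIio
      have hdq : Tp.reverse.drop (SA' q) = (Tp.take m).reverse := by
        rw [hq, hdropeq (Tp.length - m) (by omega)]
        congr 2
        omega
      have hpre : (P.reverse ++ X.reverse) <+: Tp.reverse.drop (SA' q) := by
        rw [hdq, htake]
        exact ⟨u.reverse, by simp⟩
      have hq_int : rs ≤ q ∧ q ≤ re :=
        (hInt q hqN).mpr ((List.prefix_append _ _).trans hpre)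
      refine ⟨q, hq_int, ?_⟩
      apply hGspec
      have hlen : (P.reverse ++ X.reverse).length = n := by simp [hXl, hn]
      rw [hF]
      simp only
      rw [← hlen]
      exact (List.prefix_iff_eq_take.mp hpre).symm
    · rintro ⟨q, ⟨h1, h2⟩, rfl⟩
      obtain ⟨X, hXl, hXocc, hXt⟩ := hA q h1 h2
      rw [hGspec q X hXt]
      exact ⟨hXl, hXocc⟩
  -- B basics
  have hBmono : ∀ a b : ℕ, a ≤ b → B a ≤ B b := by
    intro a b hab
    exact Finset.card_le_card
      (Finset.filter_subset_filter _ (Finset.Ioc_subset_Ioc_right hab))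
  have hBstep : ∀ x, B (x + 1) ≤ B x + 1 := by
    intro x
    have hsub : (Finset.Ioc rs (x + 1)).filter (fun p => LCP' p < n)
        ⊆ insert (x + 1) ((Finset.Ioc rs x).filter (fun p => LCP' p < n)) := by
      intro y hy
      simp only [Finset.mem_filter, Finset.mem_Ioc] at hy
      simp only [Finset.mem_insert, Finset.mem_filter, Finset.mem_Ioc]
      by_cases hyx : y = x + 1
      · exact Or.inl hyx
      · exact Or.inr ⟨⟨hy.1.1, by omega⟩, hy.2⟩
    calc B (x + 1) ≤ _ := Finset.card_le_card hsub
      _ ≤ B x + 1 := Finset.card_insert_le _ _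
  have hBrs : B rs = 0 := by
    rw [hB']
    simp [Finset.Ioc_self]
  have hBeq : ∀ a b : ℕ, rs ≤ a → a ≤ b →
      (B a = B b ↔ ∀ p, a < p → p ≤ b → ¬(LCP' p < n)) := by
    intro a b h1 h2
    have hunion : Finset.Ioc rs b = Finset.Ioc rs a ∪ Finset.Ioc a b :=
      (Finset.Ioc_union_Ioc_eq_Ioc h1 h2).symm
    have hdisj : Disjoint (Finset.Ioc rs a) (Finset.Ioc a b) := by
      rw [Finset.disjoint_left]
      intro x hx hx'
      simp only [Finset.mem_Ioc] at hx hx'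
      omega
    have hsum : B b = B a + ((Finset.Ioc a b).filter (fun p => LCP' p < n)).card := by
      rw [hB']
      simp only
      rw [hunion, Finset.filter_union,
        Finset.card_union_of_disjoint (Finset.disjoint_filter_filter hdisj)]
    constructor
    · intro heq p hp1 hp2 hcon
      have : p ∈ (Finset.Ioc a b).filter (fun p => LCP' p < n) := by
        simp only [Finset.mem_filter, Finset.mem_Ioc]
        exact ⟨⟨hp1, hp2⟩, hcon⟩
      have hcard : 0 < ((Finset.Ioc a b).filter (fun p => LCP' p < n)).card :=
        Finset.card_pos.mpr ⟨p, this⟩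
      omega
    · intro hall
      have : (Finset.Ioc a b).filter (fun p => LCP' p < n) = ∅ := by
        rw [Finset.filter_eq_empty_iff]
        intro x hx
        simp only [Finset.mem_Ioc] at hx
        exact hall x hx.1 hx.2
      rw [this] at hsum
      simp at hsum
      omega
  -- image of B is a range
  have himageB : Finset.image B s = Finset.range (B re + 1) := by
    ext m
    simp only [Finset.mem_image, Finset.mem_range, hs, Finset.mem_Icc,
      Nat.lt_succ_iff]
    constructor
    · rintro ⟨q, ⟨_, hq2⟩, rfl⟩
      exact hBmono q re hq2
    · intro hm
      obtain ⟨q, hq1, hq2, hq3⟩ := nat_ivt B hBstep re rs m hrs (by omega) hm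
      exact ⟨q, ⟨hq1, hq2⟩, hq3⟩
  -- G and B induce the same partition
  have hGB : ∀ a ∈ s, ∀ b ∈ s, (G a = G b ↔ B a = B b) := by
    have haux : ∀ a b : ℕ, rs ≤ a → a ≤ b → b ≤ re → (G a = G b ↔ B a = B b) := by
      intro a b h1 h2 h3
      have hFab : F a = F b ↔ G a = G b := by
        constructor
        · intro h; rw [hG]; simp only [h]
        · intro h
          rw [hFG a h1 (le_trans h2 h3), hFG b (le_trans h1 h2) h3, h]
      rw [← hFab, hB a b h1 h2 h3, hBeq a b h1 h2]
      constructor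
      · intro h p hp1 hp2; exact not_lt.mpr (h p hp1 hp2)
      · intro h p hp1 hp2; exact not_lt.mp (h p hp1 hp2)
    intro a ha b hb
    rw [hs, Finset.mem_Icc] at ha hb
    rcases le_total a b with hab | hab
    · exact haux a b ha.1 hab hb.2
    · rw [eq_comm, @eq_comm _ (B a)]
      exact haux b a hb.1 hab ha.2
  -- card (image G s) = card (image B s) via the pairing trick
  have hcard : (Finset.image G s).card = (Finset.image B s).card := by
    set pr : ℕ → List α × ℕ := fun q => (G q, B q) with hpr
    have e1 : Finset.image Prod.fst (Finset.image pr s) = Finset.image G s := by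
      rw [Finset.image_image]; rfl
    have e2 : Finset.image Prod.snd (Finset.image pr s) = Finset.image B s := by
      rw [Finset.image_image]; rfl
    have i1 : Set.InjOn Prod.fst (Finset.image pr s : Set (List α × ℕ)) := by
      intro x hx y hy hxy
      simp only [Finset.coe_image, Set.mem_image, Finset.mem_coe] at hx hy
      obtain ⟨a, ha, rfl⟩ := hx
      obtain ⟨b, hb, rfl⟩ := hy
      simp only [hpr] at hxy ⊢
      have hGab : G a = G b := hxy
      have hBab : B a = B b := (hGB a ha b hb).mp hGab
      rw [hGab, hBab]
    have i2 : Set.InjOn Prod.snd (Finset.image pr s : Set (List α × ℕ)) := by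
      intro x hx y hy hxy
      simp only [Finset.coe_image, Set.mem_image, Finset.mem_coe] at hx hy
      obtain ⟨a, ha, rfl⟩ := hx
      obtain ⟨b, hb, rfl⟩ := hy
      simp only [hpr] at hxy ⊢
      have hBab : B a = B b := hxy
      have hGab : G a = G b := (hGB a ha b hb).mpr hBab
      rw [hGab, hBab]
    calc (Finset.image G s).card
        = (Finset.image pr s).card := by
          rw [← e1, Finset.card_image_of_injOn i1]
      _ = (Finset.image B s).card := by
          rw [← e2, Finset.card_image_of_injOn i2]
  rw [hset, Set.ncard_coe_finset, hcard, himageB, Finset.card_range, hB']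
  simp only [Finset.filter_congr_decidable]
  omega
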